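/- Let A₁, …, A_k be bounded operators on a RKHS with Cartesian decompositions A_n = B_n + i C_n (B_n, C_n self-adjoint), and p ≥ 1. Then ber(∑_{n=1}^k A_n)^p ≤ (√2 k)^(p-1) sup_λ [ ∑_{n=1}^k ( ⟨|B_n|^(2p) k̂_λ, k̂_λ⟩ + ⟨|C_n|^(2p) k̂_λ, k̂_λ⟩ )^(1/2) ]. -/

import Mathlib

set_option synthInstance.maxHeartbeats 400000
set_option maxHeartbeats 1000000
open scoped InnerProductSpace NNReal

section Aux
variable {H : Type*} [NormedAddCommGroup H] [InnerProductSpace ℂ H] [CompleteSpace H]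

lemma tangent_rpow {a t p : ℝ} (ha : 0 ≤ a) (ht : 0 ≤ t) (hp : 1 ≤ p) :
    a ^ p + p * a ^ (p - 1) * (t - a) ≤ t ^ p := by
  rcases eq_or_lt_of_le ha with h0 | hapos
  · rcases eq_or_lt_of_le hp with h1 | h1
    · simp [← h0, ← h1, Real.rpow_one]
    · rw [← h0]
      rw [Real.zero_rpow (by positivity), Real.zero_rpow (by linarith)]
      simpa using Real.rpow_nonneg ht p
  · have hs : -1 ≤ t / a - 1 := by
      have := div_nonneg ht hapos.le; linarith
    have key := one_add_mul_self_le_rpow_one_add hs hp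
    have h1 : (1 : ℝ) + (t / a - 1) = t / a := by ring
    rw [h1] at key
    -- key : 1 + p * (t/a - 1) ≤ (t/a)^p
    have hap : (0:ℝ) < a ^ p := Real.rpow_pos_of_pos hapos p
    have key2 : a ^ p * (1 + p * (t / a - 1)) ≤ a ^ p * (t / a) ^ p :=
      mul_le_mul_of_nonneg_left key hap.le
    have hdiv : a ^ p * (t / a) ^ p = t ^ p := by
      rw [Real.div_rpow ht hapos.le, mul_div_cancel₀]
      exact (Real.rpow_pos_of_pos hapos p).ne'
    rw [hdiv] at key2
    refine le_trans (le_of_eq ?_) key2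
    have : a ^ (p - 1) = a ^ p / a := by
      rw [Real.rpow_sub hapos, Real.rpow_one]
    rw [this]
    field_simp


lemma inner_re_mono {T S : H →L[ℂ] H} (h : T ≤ S) (x : H) :
    (⟪T x, x⟫_ℂ).re ≤ (⟪S x, x⟫_ℂ).re := by
  have h2 := ((ContinuousLinearMap.le_def T S).mp h).inner_nonneg_left x
  simp only [ContinuousLinearMap.sub_apply, inner_sub_left, map_sub] at h2
  have h3 := (Complex.nonneg_iff.mp h2).1
  simp only [Complex.sub_re, Complex.zero_re] at h3
  linarith

lemma mccarthy {T : H →L[ℂ] H} (hT : 0 ≤ T) {x : H} (hx : ‖x‖ = 1) {p : ℝ} (hp : 1 ≤ p) :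
    ((⟪T x, x⟫_ℂ).re) ^ p ≤ (⟪(CFC.rpow T p) x, x⟫_ℂ).re := by
  have hT' : IsSelfAdjoint T := .of_nonneg hT
  set a : ℝ := (⟪T x, x⟫_ℂ).re with ha_def
  have ha : 0 ≤ a := (Complex.nonneg_iff.mp (((ContinuousLinearMap.nonneg_iff_isPositive T).mp hT).inner_nonneg_left x)).1
  set c₀ : ℝ := a ^ p - p * a ^ (p - 1) * a with hc0
  set c₁ : ℝ := p * a ^ (p - 1) with hc1
  have hcont : ContinuousOn (fun t : ℝ => t ^ p) (spectrum ℝ T) :=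
    (Real.continuous_rpow_const (by linarith)).continuousOn
  have key : cfc (fun t : ℝ => c₀ + c₁ * t) T ≤ cfc (fun t : ℝ => t ^ p) T := by
    refine cfc_mono (fun t ht => ?_) (by fun_prop) hcont
    have ht0 : 0 ≤ t := spectrum_nonneg_of_nonneg hT ht
    have := tangent_rpow ha ht0 hp
    nlinarith [tangent_rpow ha ht0 hp]
  have e1 : cfc (fun t : ℝ => c₀ + c₁ * t) T = algebraMap ℝ _ c₀ + c₁ • T := by
    rw [cfc_add T (fun _ => c₀) (fun t => c₁ * t), cfc_const c₀ T, cfc_const_mul_id c₁ T]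
  have e2 : CFC.rpow T p = cfc (fun t : ℝ => t ^ p) T := by
    rw [show CFC.rpow T p = cfc (fun s : ℝ≥0 => s ^ p) T from rfl, cfc_nnreal_eq_real _ T hT]
    refine cfc_congr (fun t ht => ?_)
    have ht0 : 0 ≤ t := spectrum_nonneg_of_nonneg hT ht
    simp [NNReal.coe_rpow, Real.coe_toNNReal t ht0]
  have h3 := inner_re_mono key x
  rw [e1] at h3
  rw [e2]
  refine le_trans (le_of_eq ?_) h3
  have : (algebraMap ℝ (H →L[ℂ] H) c₀ + c₁ • T) x = c₀ • x + c₁ • (T x) := by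
    simp [Algebra.algebraMap_eq_smul_one]
  rw [this]
  rw [show (c₀ • x : H) = ((c₀:ℂ)) • x from RCLike.real_smul_eq_coe_smul (K := ℂ) c₀ x,
    show (c₁ • T x : H) = ((c₁:ℂ)) • T x from RCLike.real_smul_eq_coe_smul (K := ℂ) c₁ (T x),
    inner_add_left, inner_smul_left, inner_smul_left]
  have hxx : ⟪x, x⟫_ℂ = 1 := by
    rw [inner_self_eq_norm_sq_to_K, hx]; norm_num
  rw [hxx]
  simp only [Complex.add_re, Complex.mul_re, Complex.conj_re, Complex.conj_im,
    Complex.ofReal_re, Complex.ofReal_im, Complex.one_re, Complex.one_im]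
  simp only [hc0, hc1]
  ring

lemma sum_rpow_le {k : ℕ} (hk : 0 < k) (a : Fin k → ℝ) (h : ∀ i, 0 ≤ a i) {p : ℝ}
    (hp : 1 ≤ p) : (∑ i, a i) ^ p ≤ (k : ℝ) ^ (p - 1) * ∑ i, a i ^ p := by
  have hk' : (0:ℝ) < k := by exact_mod_cast hk
  have hw : ∀ i ∈ Finset.univ, (0:ℝ) ≤ (fun _ : Fin k => 1 / (k:ℝ)) i := by
    intro i _; positivity
  have hw' : ∑ _i : Fin k, (1 / (k:ℝ)) = 1 := by
    rw [Finset.sum_const, Finset.card_univ, Fintype.card_fin, nsmul_eq_mul]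
    field_simp
  have hz : ∀ i ∈ Finset.univ, 0 ≤ a i := fun i _ => h i
  have key := Real.rpow_arith_mean_le_arith_mean_rpow Finset.univ
    (fun _ : Fin k => 1 / (k:ℝ)) a hw hw' hz hp
  have e1 : ∑ i, 1 / (k:ℝ) * a i = (1/(k:ℝ)) * ∑ i, a i := by
    rw [Finset.mul_sum]
  have e2 : ∑ i, 1 / (k:ℝ) * a i ^ p = (1/(k:ℝ)) * ∑ i, a i ^ p := by
    rw [Finset.mul_sum]
  rw [e1, e2] at key
  have hS : 0 ≤ ∑ i, a i := Finset.sum_nonneg fun i _ => h i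
  rw [Real.mul_rpow (by positivity) hS] at key
  have key2 := mul_le_mul_of_nonneg_left key (le_of_lt (Real.rpow_pos_of_pos hk' p))
  calc (∑ i, a i) ^ p
      = (k:ℝ) ^ p * ((1/(k:ℝ)) ^ p * (∑ i, a i) ^ p) := by
        rw [← mul_assoc, ← Real.mul_rpow hk'.le (by positivity)]
        rw [mul_one_div, div_self hk'.ne', Real.one_rpow, one_mul]
    _ ≤ (k:ℝ) ^ p * ((1/(k:ℝ)) * ∑ i, a i ^ p) := key2
    _ = (k:ℝ) ^ (p - 1) * ∑ i, a i ^ p := by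
        rw [← mul_assoc, Real.rpow_sub hk', Real.rpow_one]
        ring
lemma two_point_rpow (x y : ℝ) (hx : 0 ≤ x) (hy : 0 ≤ y) {p : ℝ} (hp : 1 ≤ p) :
    (x + y) ^ p ≤ 2 ^ (p - 1) * (x ^ p + y ^ p) := by
  have := sum_rpow_le (k := 2) (by norm_num) ![x, y]
    (fun i => by fin_cases i <;> simpa) hp
  simpa [Fin.sum_univ_two] using this


lemma absPow_eq (T : H →L[ℂ] H) {p : ℝ} (hp : 1 ≤ p) :
    CFC.rpow (CFC.sqrt (star T * T)) (2 * p) = CFC.rpow (star T * T) p := by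
  have ha : (0:H →L[ℂ] H) ≤ star T * T := star_mul_self_nonneg T
  have h2p : ((2*p).toNNReal : ℝ) = 2 * p := Real.coe_toNNReal _ (by linarith)
  have key := CFC.rpow_sqrt_nnreal (a := star T * T) (x := (2*p).toNNReal) ha
  rw [h2p, show (2 * p / 2 : ℝ) = p by ring] at key
  exact key

lemma inner_star_mul_self (T : H →L[ℂ] H) (x : H) :
    (⟪(star T * T) x, x⟫_ℂ).re = ‖T x‖ ^ 2 := by
  rw [ContinuousLinearMap.mul_apply, ContinuousLinearMap.star_eq_adjoint,
    ContinuousLinearMap.adjoint_inner_left, inner_self_eq_norm_sq_to_K]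
  norm_cast


lemma selfadj_inner_im (T : H →L[ℂ] H) (hT : IsSelfAdjoint T) (x : H) :
    (⟪T x, x⟫_ℂ).im = 0 := by
  have h1 : ContinuousLinearMap.adjoint T = T := by
    rw [← ContinuousLinearMap.star_eq_adjoint, hT.star_eq]
  have h2 : ⟪T x, x⟫_ℂ = ⟪x, T x⟫_ℂ := by
    conv_lhs => rw [← h1, ContinuousLinearMap.adjoint_inner_left]
  rw [← Complex.conj_eq_iff_im, inner_conj_symm]
  exact h2.symm

lemma abs_inner_cartesian {Bn Cn An : H →L[ℂ] H} (hBn : IsSelfAdjoint Bn)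
    (hCn : IsSelfAdjoint Cn) (hAn : An = Bn + Complex.I • Cn) (x : H) :
    ‖⟪An x, x⟫_ℂ‖ =
      Real.sqrt ((⟪Bn x, x⟫_ℂ).re ^ 2 + (⟪Cn x, x⟫_ℂ).re ^ 2) := by
  have hB0 := selfadj_inner_im Bn hBn x
  have hC0 := selfadj_inner_im Cn hCn x
  have hz : ⟪An x, x⟫_ℂ = ⟪Bn x, x⟫_ℂ + (-Complex.I) * ⟪Cn x, x⟫_ℂ := by
    rw [hAn, ContinuousLinearMap.add_apply, inner_add_left,
      ContinuousLinearMap.smul_apply, inner_smul_left, Complex.conj_I]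
  rw [Complex.norm_def, Complex.normSq_apply, hz]
  congr 1
  simp only [Complex.add_re, Complex.add_im, Complex.mul_re, Complex.mul_im,
    Complex.neg_re, Complex.neg_im, Complex.I_re, Complex.I_im, hB0, hC0]
  ring

end Aux

section Main
variable {H : Type*} [NormedAddCommGroup H] [InnerProductSpace ℂ H] [CompleteSpace H]

lemma pointwise_bound {k : ℕ} (A B C : Fin k → (H →L[ℂ] H))
    (hB : ∀ n, IsSelfAdjoint (B n)) (hC : ∀ n, IsSelfAdjoint (C n))
    (hA : ∀ n, A n = B n + Complex.I • C n) {p : ℝ} (hp : 1 ≤ p)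
    (x : H) (hx : ‖x‖ = 1) :
    (‖⟪(∑ n, A n) x, x⟫_ℂ‖) ^ p ≤
      (Real.sqrt 2 * k) ^ (p - 1) * ∑ n, Real.sqrt
        ((⟪(CFC.rpow (CFC.sqrt (star (B n) * B n)) (2 * p)) x, x⟫_ℂ).re +
          (⟪(CFC.rpow (CFC.sqrt (star (C n) * C n)) (2 * p)) x, x⟫_ℂ).re) := by
  have hp0 : 0 ≤ p := by linarith
  set b : Fin k → ℝ := fun n => (⟪B n x, x⟫_ℂ).re with hb_def
  set c : Fin k → ℝ := fun n => (⟪C n x, x⟫_ℂ).re with hc_def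
  set β : Fin k → ℝ := fun n =>
    (⟪(CFC.rpow (CFC.sqrt (star (B n) * B n)) (2 * p)) x, x⟫_ℂ).re with hβ_def
  set γ : Fin k → ℝ := fun n =>
    (⟪(CFC.rpow (CFC.sqrt (star (C n) * C n)) (2 * p)) x, x⟫_ℂ).re with hγ_def
  -- key estimate for self-adjoint operators
  have keyBC : ∀ (T : H →L[ℂ] H),
      (((⟪T x, x⟫_ℂ).re) ^ 2) ^ p ≤
        (⟪(CFC.rpow (CFC.sqrt (star T * T)) (2 * p)) x, x⟫_ℂ).re := by
    intro T
    rw [absPow_eq T hp]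
    have h1 : |(⟪T x, x⟫_ℂ).re| ≤ ‖T x‖ := by
      calc |(⟪T x, x⟫_ℂ).re| ≤ ‖⟪T x, x⟫_ℂ‖ := Complex.abs_re_le_norm _
        _ = ‖⟪T x, x⟫_ℂ‖ := rfl
        _ ≤ ‖T x‖ * ‖x‖ := norm_inner_le_norm _ _
        _ = ‖T x‖ := by rw [hx, mul_one]
    have h2 : ((⟪T x, x⟫_ℂ).re) ^ 2 ≤ ‖T x‖ ^ 2 := by
      rw [← sq_abs]
      exact pow_le_pow_left₀ (abs_nonneg _) h1 2
    calc (((⟪T x, x⟫_ℂ).re) ^ 2) ^ p ≤ (‖T x‖ ^ 2) ^ p :=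
          Real.rpow_le_rpow (sq_nonneg _) h2 hp0
      _ = ((⟪(star T * T) x, x⟫_ℂ).re) ^ p := by rw [inner_star_mul_self]
      _ ≤ (⟪(CFC.rpow (star T * T) p) x, x⟫_ℂ).re :=
          mccarthy (star_mul_self_nonneg T) hx hp
  have hβ : ∀ n, ((b n) ^ 2) ^ p ≤ β n := fun n => keyBC (B n)
  have hγ : ∀ n, ((c n) ^ 2) ^ p ≤ γ n := fun n => keyBC (C n)
  have hβ0 : ∀ n, 0 ≤ β n := fun n =>
    le_trans (Real.rpow_nonneg (sq_nonneg _) p) (hβ n)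
  have hγ0 : ∀ n, 0 ≤ γ n := fun n =>
    le_trans (Real.rpow_nonneg (sq_nonneg _) p) (hγ n)
  -- step 1 : triangle inequality
  have step1 : ‖⟪(∑ n, A n) x, x⟫_ℂ‖ ≤
      ∑ n, Real.sqrt ((b n) ^ 2 + (c n) ^ 2) := by
    have e : ⟪(∑ n, A n) x, x⟫_ℂ = ∑ n, ⟪A n x, x⟫_ℂ := by
      rw [ContinuousLinearMap.sum_apply, sum_inner]
    calc ‖⟪(∑ n, A n) x, x⟫_ℂ‖ = ‖∑ n, ⟪A n x, x⟫_ℂ‖ := by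
          rw [e]
      _ ≤ ∑ n, ‖⟪A n x, x⟫_ℂ‖ := norm_sum_le _ _
      _ = ∑ n, Real.sqrt ((b n) ^ 2 + (c n) ^ 2) := by
          refine Finset.sum_congr rfl fun n _ => ?_
          rw [abs_inner_cartesian (hB n) (hC n) (hA n) x]
  rcases Nat.eq_zero_or_pos k with hk | hk
  · subst hk
    simp only [Finset.univ_eq_empty, Finset.sum_empty, ContinuousLinearMap.zero_apply,
      inner_zero_left, map_zero, norm_zero, mul_zero]
    rw [Real.zero_rpow (by linarith)]
  -- step 3 : per-term bound
  have step3 : ∀ n : Fin k, (Real.sqrt ((b n) ^ 2 + (c n) ^ 2)) ^ p ≤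
      2 ^ ((p - 1) / 2) * Real.sqrt (β n + γ n) := by
    intro n
    have hu : (0:ℝ) ≤ (b n) ^ 2 + (c n) ^ 2 := by positivity
    have e1 : (Real.sqrt ((b n) ^ 2 + (c n) ^ 2)) ^ p =
        (((b n) ^ 2 + (c n) ^ 2) ^ p) ^ (1/2 : ℝ) := by
      rw [Real.sqrt_eq_rpow, ← Real.rpow_mul hu, ← Real.rpow_mul hu]
      ring_nf
    have e2 : ((b n) ^ 2 + (c n) ^ 2) ^ p ≤ 2 ^ (p - 1) * (β n + γ n) := by
      calc ((b n) ^ 2 + (c n) ^ 2) ^ p ≤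
            2 ^ (p - 1) * (((b n) ^ 2) ^ p + ((c n) ^ 2) ^ p) :=
            two_point_rpow _ _ (sq_nonneg _) (sq_nonneg _) hp
        _ ≤ 2 ^ (p - 1) * (β n + γ n) := by
            have := add_le_add (hβ n) (hγ n)
            exact mul_le_mul_of_nonneg_left this (Real.rpow_nonneg (by norm_num) _)
    calc (Real.sqrt ((b n) ^ 2 + (c n) ^ 2)) ^ p
        = (((b n) ^ 2 + (c n) ^ 2) ^ p) ^ (1/2 : ℝ) := e1
      _ ≤ (2 ^ (p - 1) * (β n + γ n)) ^ (1/2 : ℝ) :=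
          Real.rpow_le_rpow (Real.rpow_nonneg hu p) e2 (by norm_num)
      _ = 2 ^ ((p - 1) / 2) * Real.sqrt (β n + γ n) := by
          rw [Real.mul_rpow (Real.rpow_nonneg (by norm_num) _)
            (add_nonneg (hβ0 n) (hγ0 n)), ← Real.rpow_mul (by norm_num : (0:ℝ) ≤ 2),
            Real.sqrt_eq_rpow]
          ring_nf
  -- assemble
  have step2 : (∑ n, Real.sqrt ((b n) ^ 2 + (c n) ^ 2)) ^ p ≤
      (k : ℝ) ^ (p - 1) * ∑ n, (Real.sqrt ((b n) ^ 2 + (c n) ^ 2)) ^ p :=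
    sum_rpow_le hk _ (fun n => Real.sqrt_nonneg _) hp
  have hconst : (Real.sqrt 2 * k) ^ (p - 1) = (k : ℝ) ^ (p - 1) * 2 ^ ((p - 1) / 2) := by
    rw [Real.mul_rpow (Real.sqrt_nonneg 2) (Nat.cast_nonneg k), Real.sqrt_eq_rpow,
      ← Real.rpow_mul (by norm_num : (0:ℝ) ≤ 2)]
    ring_nf
  calc (‖⟪(∑ n, A n) x, x⟫_ℂ‖) ^ p
      ≤ (∑ n, Real.sqrt ((b n) ^ 2 + (c n) ^ 2)) ^ p :=
        Real.rpow_le_rpow (norm_nonneg _) step1 hp0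
    _ ≤ (k : ℝ) ^ (p - 1) * ∑ n, (Real.sqrt ((b n) ^ 2 + (c n) ^ 2)) ^ p := step2
    _ ≤ (k : ℝ) ^ (p - 1) * ∑ n, (2 ^ ((p - 1) / 2) * Real.sqrt (β n + γ n)) := by
        refine mul_le_mul_of_nonneg_left (Finset.sum_le_sum fun n _ => step3 n)
          (Real.rpow_nonneg (Nat.cast_nonneg k) _)
    _ = (Real.sqrt 2 * k) ^ (p - 1) * ∑ n, Real.sqrt (β n + γ n) := by
        rw [← Finset.mul_sum, hconst]; ring

end Main

open scoped InnerProductSpace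

/-- Berezin number bound via Cartesian decompositions `Aₙ = Bₙ + iCₙ`:
`ber(∑ Aₙ)^p ≤ (√2 k)^(p-1) sup_λ ∑ₙ (⟨|Bₙ|^(2p) k̂_λ, k̂_λ⟩ + ⟨|Cₙ|^(2p) k̂_λ, k̂_λ⟩)^(1/2)`. -/
theorem ber_sum_cartesian {H : Type*} [NormedAddCommGroup H] [InnerProductSpace ℂ H]
    [CompleteSpace H] {Ω : Type*} (kv : Ω → H) (hkv : ∀ lam, ‖kv lam‖ = 1)
    (k : ℕ) (A B C : Fin k → (H →L[ℂ] H))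
    (hB : ∀ n, IsSelfAdjoint (B n)) (hC : ∀ n, IsSelfAdjoint (C n))
    (hA : ∀ n, A n = B n + Complex.I • C n) (p : ℝ) (hp : 1 ≤ p) :
    (let absPow : (H →L[ℂ] H) → ℝ → (H →L[ℂ] H) :=
       fun T q => CFC.rpow (CFC.sqrt (star T * T)) q
     (⨆ lam, ‖⟪(∑ n, A n) (kv lam), kv lam⟫_ℂ‖) ^ p ≤
      (Real.sqrt 2 * k) ^ (p - 1) *
        ⨆ lam, ∑ n, Real.sqrt
          ((⟪(absPow (B n) (2 * p)) (kv lam), kv lam⟫_ℂ).re +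
            (⟪(absPow (C n) (2 * p)) (kv lam), kv lam⟫_ℂ).re)) := by
  show (⨆ lam, ‖⟪(∑ n, A n) (kv lam), kv lam⟫_ℂ‖) ^ p ≤
      (Real.sqrt 2 * k) ^ (p - 1) *
        ⨆ lam, ∑ n, Real.sqrt
          ((⟪(CFC.rpow (CFC.sqrt (star (B n) * B n)) (2 * p)) (kv lam), kv lam⟫_ℂ).re +
            (⟪(CFC.rpow (CFC.sqrt (star (C n) * C n)) (2 * p)) (kv lam), kv lam⟫_ℂ).re)
  have hp0 : 0 ≤ p := by linarith
  have hpne : p ≠ 0 := by linarith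
  set F : Ω → ℝ := fun lam => ‖⟪(∑ n, A n) (kv lam), kv lam⟫_ℂ‖ with hF_def
  set S : Ω → ℝ := fun lam => ∑ n, Real.sqrt
      ((⟪(CFC.rpow (CFC.sqrt (star (B n) * B n)) (2 * p)) (kv lam), kv lam⟫_ℂ).re +
        (⟪(CFC.rpow (CFC.sqrt (star (C n) * C n)) (2 * p)) (kv lam), kv lam⟫_ℂ).re)
    with hS_def
  set cst : ℝ := (Real.sqrt 2 * k) ^ (p - 1) with hcst_def
  have hcst0 : 0 ≤ cst := Real.rpow_nonneg (by positivity) _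
  have hFnonneg : ∀ lam, 0 ≤ F lam := fun lam => norm_nonneg _
  have hSnonneg : ∀ lam, 0 ≤ S lam := fun lam =>
    Finset.sum_nonneg fun n _ => Real.sqrt_nonneg _
  have pointwise : ∀ lam, F lam ^ p ≤ cst * S lam := fun lam =>
    pointwise_bound A B C hB hC hA hp (kv lam) (hkv lam)
  -- boundedness
  have hFb : ∀ lam, F lam ≤ ‖∑ n, A n‖ := by
    intro lam
    calc F lam = ‖⟪(∑ n, A n) (kv lam), kv lam⟫_ℂ‖ := rfl
      _ ≤ ‖(∑ n, A n) (kv lam)‖ * ‖kv lam‖ := norm_inner_le_norm _ _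
      _ ≤ ‖∑ n, A n‖ * ‖kv lam‖ * ‖kv lam‖ := by
          exact mul_le_mul_of_nonneg_right ((∑ n, A n).le_opNorm _) (norm_nonneg _)
      _ = ‖∑ n, A n‖ := by rw [hkv lam]; ring
  have hFbdd : BddAbove (Set.range F) := ⟨‖∑ n, A n‖, by rintro y ⟨lam, rfl⟩; exact hFb lam⟩
  have hSb : ∀ lam, S lam ≤ ∑ n : Fin k, Real.sqrt
      (‖CFC.rpow (CFC.sqrt (star (B n) * B n)) (2 * p)‖ +
        ‖CFC.rpow (CFC.sqrt (star (C n) * C n)) (2 * p)‖) := by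
    intro lam
    have gen : ∀ T : H →L[ℂ] H, (⟪T (kv lam), kv lam⟫_ℂ).re ≤ ‖T‖ := by
      intro T
      calc (⟪T (kv lam), kv lam⟫_ℂ).re ≤ ‖⟪T (kv lam), kv lam⟫_ℂ‖ :=
            Complex.re_le_norm _
        _ = ‖⟪T (kv lam), kv lam⟫_ℂ‖ := rfl
        _ ≤ ‖T (kv lam)‖ * ‖kv lam‖ := norm_inner_le_norm _ _
        _ ≤ ‖T‖ * ‖kv lam‖ * ‖kv lam‖ :=
            mul_le_mul_of_nonneg_right (T.le_opNorm _) (norm_nonneg _)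
        _ = ‖T‖ := by rw [hkv lam]; ring
    exact Finset.sum_le_sum fun n _ => Real.sqrt_le_sqrt (add_le_add (gen _) (gen _))
  have hSbdd : BddAbove (Set.range S) := ⟨_, by rintro y ⟨lam, rfl⟩; exact hSb lam⟩
  rcases isEmpty_or_nonempty Ω with hΩ | hΩ
  · rw [Real.iSup_of_isEmpty, Real.iSup_of_isEmpty, Real.zero_rpow hpne, mul_zero]
  · haveI := hΩ
    obtain ⟨lam₀⟩ := hΩ
    have hMS : 0 ≤ ⨆ lam, S lam := le_trans (hSnonneg lam₀) (le_ciSup hSbdd lam₀)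
    have hcM : 0 ≤ cst * ⨆ lam, S lam := mul_nonneg hcst0 hMS
    have key2 : ∀ lam, F lam ^ p ≤ cst * ⨆ lam, S lam := fun lam =>
      le_trans (pointwise lam) (mul_le_mul_of_nonneg_left (le_ciSup hSbdd lam) hcst0)
    have key3 : ∀ lam, F lam ≤ (cst * ⨆ lam, S lam) ^ (1/p : ℝ) := by
      intro lam
      have : F lam = (F lam ^ p) ^ (1/p : ℝ) := by
        rw [← Real.rpow_mul (hFnonneg lam), mul_one_div, div_self hpne, Real.rpow_one]
      rw [this]
      exact Real.rpow_le_rpow (Real.rpow_nonneg (hFnonneg lam) p) (key2 lam) (by positivity)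
    have supF_le : (⨆ lam, F lam) ≤ (cst * ⨆ lam, S lam) ^ (1/p : ℝ) := ciSup_le key3
    have h0supF : 0 ≤ ⨆ lam, F lam := le_trans (hFnonneg lam₀) (le_ciSup hFbdd lam₀)
    calc (⨆ lam, F lam) ^ p ≤ ((cst * ⨆ lam, S lam) ^ (1/p : ℝ)) ^ p :=
          Real.rpow_le_rpow h0supF supF_le hp0
      _ = cst * ⨆ lam, S lam := by
          rw [← Real.rpow_mul hcM, one_div, inv_mul_cancel₀ hpne, Real.rpow_one]
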